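/- Let $H \subseteq G$ be a subgraph of a directed acyclic graph $G$. Then $\tilde Q_H$ is a face of $\tilde Q_G$ if and only if the component multigraph $H_{comp}$ is loopless and acyclic, i.e., (1) every edge of $G$ joining two vertices in the same connected component of $H^{un}$ is already an edge of $H$, and (2) there is no sequence of connected components $C_1, C_2, \dots, C_k = C_1$ of $H^{un}$ with $k \geq 2$ such that for each $i$ there is an edge of $E(G) \setminus E(H)$ from a vertex of $C_i$ to a vertex of $C_{i+1}$. -/

import Mathlib

/-- The vector `e_i - e_j` associated to the directed edge `e = (i, j)`. -/
def vecOf (n : ℕ) (e : Fin n × Fin n) : Fin n → ℝ :=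
  fun k => (if k = e.1 then 1 else 0) - (if k = e.2 then 1 else 0)

/-- The root polytope `tilde Q_G = conv{0, e_i - e_j : (i,j) ∈ E(G)}`. -/
def tQ (n : ℕ) (E : Set (Fin n × Fin n)) : Set (Fin n → ℝ) :=
  convexHull ℝ ({0} ∪ vecOf n '' E)

/-- `F` is a face of `P`: cut out by a supporting hyperplane. -/
def IsFace (n : ℕ) (P F : Set (Fin n → ℝ)) : Prop :=
  ∃ (c : Fin n → ℝ) (a : ℝ), (∀ x ∈ P, a ≤ ∑ i, c i * x i) ∧
    F = {x ∈ P | ∑ i, c i * x i = a}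

/-- Undirected adjacency underlying the subgraph `H`. -/
def UAdj {n : ℕ} (E : Set (Fin n × Fin n)) (u v : Fin n) : Prop :=
  (u, v) ∈ E ∨ (v, u) ∈ E

/-- `u` and `v` lie in the same connected component of the underlying undirected graph. -/
def SameComp {n : ℕ} (E : Set (Fin n × Fin n)) : Fin n → Fin n → Prop :=
  Relation.ReflTransGen (UAdj E)

/-- The edge relation of the component multigraph `H_comp` (on vertices of the ambient
graph, identified up to connected components of `H^un`): `u` is in the source component of
some edge of `E(G) \ E(H)` whose target component contains `v`. -/
def HCompRel {n : ℕ} (E EH : Set (Fin n × Fin n)) (u v : Fin n) : Prop :=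
  ∃ e ∈ E, e ∉ EH ∧ SameComp EH u e.1 ∧ SameComp EH e.2 v

lemma dot_lin {n : ℕ} (c : Fin n → ℝ) :
    IsLinearMap ℝ (fun x : Fin n → ℝ => ∑ i, c i * x i) := by
  constructor
  · intro x y
    simp only [Pi.add_apply, mul_add]
    rw [Finset.sum_add_distrib]
  · intro r x
    simp only [Pi.smul_apply, smul_eq_mul, Finset.mul_sum]
    exact Finset.sum_congr rfl fun i _ => by ring

lemma dot_vecOf {n : ℕ} (c : Fin n → ℝ) (f : Fin n × Fin n) :
    ∑ i, c i * vecOf n f i = c f.1 - c f.2 := by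
  simp [vecOf, mul_sub, Finset.sum_sub_distrib, mul_ite, mul_one, mul_zero,
    Finset.sum_ite_eq']

/-- Key extraction lemma: if `e_i - e_j` (with `i ≠ j`) lies in `tQ EH`, then `(i,j)` is
an edge of `EH`. -/
lemma vecOf_mem_tQ {n : ℕ} {EH : Set (Fin n × Fin n)} {i j : Fin n} (hij : i ≠ j)
    (h : vecOf n (i, j) ∈ tQ n EH) : (i, j) ∈ EH := by
  classical
  have hfin : ({0} ∪ vecOf n '' EH : Set (Fin n → ℝ)).Finite := Set.toFinite _
  rw [tQ, hfin.convexHull_eq] at h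
  obtain ⟨w, hw0, hw1, hx⟩ := h
  set T := hfin.toFinset with hT
  rw [Finset.centerMass_eq_of_sum_1 _ _ hw1] at hx
  have hmem : ∀ y ∈ T, y = 0 ∨ ∃ f ∈ EH, vecOf n f = y := by
    intro y hy
    rcases hfin.mem_toFinset.mp hy with h0 | ⟨f, hf, rfl⟩
    · exact Or.inl h0
    · exact Or.inr ⟨f, hf, rfl⟩
  have hbound : ∀ y ∈ T, ∀ k : Fin n, -1 ≤ y k ∧ y k ≤ 1 := by
    intro y hy k
    rcases hmem y hy with rfl | ⟨f, _, rfl⟩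
    · norm_num
    · unfold vecOf; split_ifs <;> norm_num
  have hwnn : ∀ y ∈ T, 0 ≤ w y := fun y hy => hw0 y (hfin.mem_toFinset.mp hy)
  have hxi : ∑ y ∈ T, w y * y i = 1 := by
    have := congrFun hx i
    simp only [Finset.sum_apply, Pi.smul_apply, smul_eq_mul, id_eq] at this
    rw [this]
    simp [vecOf, hij]
  have hxj : ∑ y ∈ T, w y * y j = -1 := by
    have := congrFun hx j
    simp only [Finset.sum_apply, Pi.smul_apply, smul_eq_mul, id_eq] at this
    rw [this]
    simp [vecOf, Ne.symm hij]
  have heqi : ∀ y ∈ T, w y * y i = w y := by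
    have hle : ∀ y ∈ T, w y * y i ≤ w y := fun y hy => by
      have := mul_le_mul_of_nonneg_left (hbound y hy i).2 (hwnn y hy)
      simpa using this
    exact (Finset.sum_eq_sum_iff_of_le hle).mp (by rw [hxi, hw1])
  have heqj : ∀ y ∈ T, -(w y) = w y * y j := by
    have hle : ∀ y ∈ T, -(w y) ≤ w y * y j := fun y hy => by
      have := mul_le_mul_of_nonneg_left (hbound y hy j).1 (hwnn y hy)
      simpa using this
    refine (Finset.sum_eq_sum_iff_of_le hle).mp ?_
    rw [hxj, Finset.sum_neg_distrib, hw1]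
  obtain ⟨y, hyT, hyne⟩ : ∃ y ∈ T, w y ≠ 0 :=
    Finset.exists_ne_zero_of_sum_ne_zero (by rw [hw1]; norm_num)
  have hyi : y i = 1 := by
    have h2 : w y * y i = w y * 1 := by rw [heqi y hyT, mul_one]
    exact mul_left_cancel₀ hyne h2
  have hyj : y j = -1 := by
    have := (heqj y hyT).symm
    have h2 : w y * y j = w y * (-1) := by rw [this]; ring
    exact mul_left_cancel₀ hyne h2
  rcases hmem y hyT with rfl | ⟨f, hf, rfl⟩
  · simp at hyi
  · have h1 : i = f.1 := by
      by_contra hne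
      simp only [vecOf, if_neg hne] at hyi
      split_ifs at hyi <;> norm_num at hyi
    have h2 : j = f.2 := by
      by_contra hne
      simp only [vecOf, if_neg hne] at hyj
      split_ifs at hyj <;> norm_num at hyj
    have : f = (i, j) := by
      cases f; simp_all
    rwa [this] at hf

/-- `tilde Q_H` is a face of `tilde Q_G` iff `H_comp` is loopless and acyclic. -/
theorem stmt6 (n : ℕ) (E EH : Set (Fin n × Fin n))
    (hE : ∀ e ∈ E, e.1 < e.2) (hH : EH ⊆ E) :
    IsFace n (tQ n E) (tQ n EH) ↔
      ((∀ e ∈ E, SameComp EH e.1 e.2 → e ∈ EH) ∧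
        ∀ u : Fin n, ¬ Relation.TransGen (HCompRel E EH) u u) := by
  classical
  constructor
  · rintro ⟨c, a, hsupp, hFeq⟩
    have h0H : (0 : Fin n → ℝ) ∈ tQ n EH :=
      subset_convexHull ℝ _ (Set.mem_union_left _ rfl)
    have ha : a = 0 := by
      have h1 : (0 : Fin n → ℝ) ∈ {x ∈ tQ n E | ∑ i, c i * x i = a} := hFeq ▸ h0H
      have := h1.2
      simpa using this.symm
    have hvH : ∀ f ∈ EH, c f.1 = c f.2 := by
      intro f hf
      have hm : vecOf n f ∈ tQ n EH :=
        subset_convexHull ℝ _ (Set.mem_union_right _ ⟨f, hf, rfl⟩)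
      have h1 : vecOf n f ∈ {x ∈ tQ n E | ∑ i, c i * x i = a} := hFeq ▸ hm
      have := h1.2
      rw [dot_vecOf, ha] at this
      linarith
    have hSame : ∀ u v : Fin n, SameComp EH u v → c u = c v := by
      intro u v h
      induction h with
      | refl => rfl
      | tail _ hstep ih =>
        rcases hstep with h1 | h1
        · exact ih.trans (hvH _ h1)
        · exact ih.trans (hvH _ h1).symm
    have hkey : ∀ e ∈ E, c e.1 = c e.2 → e ∈ EH := by
      intro e he hce
      have hm : vecOf n e ∈ tQ n E :=
        subset_convexHull ℝ _ (Set.mem_union_right _ ⟨e, he, rfl⟩)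
      have hdot : ∑ i, c i * vecOf n e i = a := by rw [dot_vecOf, hce, sub_self, ha]
      have hmF : vecOf n e ∈ tQ n EH := by rw [hFeq]; exact ⟨hm, hdot⟩
      have := vecOf_mem_tQ (ne_of_lt (hE e he)) (by rw [Prod.mk.eta]; exact hmF)
      rwa [Prod.mk.eta] at this
    refine ⟨fun e he hsc => hkey e he (hSame _ _ hsc), ?_⟩
    intro u hcyc
    have hstep : ∀ v w : Fin n, HCompRel E EH v w → c w < c v := by
      rintro v w ⟨e, he, heH, h1, h2⟩
      have hge : a ≤ ∑ i, c i * vecOf n e i :=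
        hsupp _ (subset_convexHull ℝ _ (Set.mem_union_right _ ⟨e, he, rfl⟩))
      rw [dot_vecOf, ha] at hge
      have hne : c e.1 ≠ c e.2 := fun hcc => heH (hkey e he hcc)
      have hlt : c e.2 < c e.1 := lt_of_le_of_ne (by linarith) fun h => hne h.symm
      calc c w = c e.2 := (hSame _ _ h2).symm
        _ < c e.1 := hlt
        _ = c v := (hSame _ _ h1).symm
    have htr : ∀ v w : Fin n, Relation.TransGen (HCompRel E EH) v w → c w < c v := by
      intro v w h
      induction h with
      | single h => exact hstep _ _ h
      | tail _ h ih => exact lt_trans (hstep _ _ h) ih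
    exact lt_irrefl _ (htr u u hcyc)
  · rintro ⟨-, hacyc⟩
    -- build a potential function that is constant on components and strictly decreasing
    -- along edges of the component multigraph
    set R := HCompRel E EH with hR
    set desc : Fin n → Set (Fin n) := fun u => {v | Relation.TransGen R u v} with hdesc
    set c : Fin n → ℝ := fun u => ((desc u).ncard : ℝ) with hc
    have hsymm : Symmetric (SameComp EH) :=
      have : Std.Symm (UAdj EH) := ⟨fun a b h => Or.symm h⟩
      fun x y h => (Relation.ReflTransGen.stdSymm : Std.Symm (Relation.ReflTransGen (UAdj EH))).symm x y h
    have hRcongr : ∀ u u' v : Fin n, SameComp EH u u' → R u v → R u' v := by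
      rintro u u' v hu ⟨e, he, heH, h1, h2⟩
      exact ⟨e, he, heH, Relation.ReflTransGen.trans (hsymm hu) h1, h2⟩
    have hTcongr : ∀ u u' v : Fin n, SameComp EH u u' →
        Relation.TransGen R u v → Relation.TransGen R u' v := by
      intro u u' v hu h
      rw [Relation.TransGen.head'_iff] at h ⊢
      obtain ⟨b, hb, hbv⟩ := h
      exact ⟨b, hRcongr _ _ _ hu hb, hbv⟩
    have hconst : ∀ u v : Fin n, SameComp EH u v → c u = c v := by
      intro u v h
      have : desc u = desc v :=
        Set.ext fun w => ⟨fun hw => hTcongr _ _ _ h hw, fun hw => hTcongr _ _ _ (hsymm h) hw⟩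
      simp [hc, this]
    have hlt : ∀ u v : Fin n, R u v → c v < c u := by
      intro u v h
      have hsub : desc v ⊆ desc u := fun w hw => Relation.TransGen.head h hw
      have hss : desc v ⊂ desc u :=
        ⟨hsub, fun hcon => hacyc v (hcon (Relation.TransGen.single h))⟩
      have := Set.ncard_lt_ncard hss (Set.toFinite _)
      simp only [hc]
      exact_mod_cast this
    have hEH : ∀ f ∈ EH, c f.1 = c f.2 := fun f hf =>
      hconst _ _ (Relation.ReflTransGen.single (Or.inl hf))
    have hnEH : ∀ e ∈ E, e ∉ EH → c e.2 < c e.1 := fun e he heH =>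
      hlt _ _ ⟨e, he, heH, Relation.ReflTransGen.refl, Relation.ReflTransGen.refl⟩
    refine ⟨c, 0, ?_, ?_⟩
    · -- support inequality
      intro x hx
      have hsub : ({0} ∪ vecOf n '' E : Set (Fin n → ℝ)) ⊆
          {x : Fin n → ℝ | 0 ≤ ∑ i, c i * x i} := by
        rintro y (rfl | ⟨f, hf, rfl⟩)
        · simp
        · rw [Set.mem_setOf_eq, dot_vecOf]
          by_cases hfH : f ∈ EH
          · rw [hEH f hfH]; simp
          · linarith [hnEH f hf hfH]
      exact convexHull_min hsub (convex_halfSpace_ge (dot_lin c) 0) hx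
    · -- the face equality
      apply Set.eq_of_subset_of_subset
      · intro x hx
        have hmono : tQ n EH ⊆ tQ n E :=
          convexHull_mono (Set.union_subset_union_right _ (Set.image_mono hH))
        refine ⟨hmono hx, ?_⟩
        have hsub : ({0} ∪ vecOf n '' EH : Set (Fin n → ℝ)) ⊆
            {x : Fin n → ℝ | ∑ i, c i * x i = 0} := by
          rintro y (rfl | ⟨f, hf, rfl⟩)
          · simp
          · rw [Set.mem_setOf_eq, dot_vecOf, hEH f hf, sub_self]
        exact convexHull_min hsub (convex_hyperplane (dot_lin c) 0) hx
      · rintro x ⟨hxE, hx0⟩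
        have hfin : ({0} ∪ vecOf n '' E : Set (Fin n → ℝ)).Finite := Set.toFinite _
        rw [tQ, hfin.convexHull_eq] at hxE
        obtain ⟨w, hw0, hw1, hx⟩ := hxE
        set T := hfin.toFinset with hT
        have hxsum : T.centerMass w id = x := hx
        rw [Finset.centerMass_eq_of_sum_1 _ _ hw1] at hxsum
        have hwnn : ∀ y ∈ T, 0 ≤ w y := fun y hy => hw0 y (hfin.mem_toFinset.mp hy)
        have hnny : ∀ y ∈ T, 0 ≤ ∑ i, c i * y i := by
          intro y hy
          rcases hfin.mem_toFinset.mp hy with rfl | ⟨f, hf, rfl⟩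
          · simp
          · rw [dot_vecOf]
            by_cases hfH : f ∈ EH
            · rw [hEH f hfH]; simp
            · linarith [hnEH f hf hfH]
        have hdotsum : ∑ i, c i * x i = ∑ y ∈ T, w y * ∑ i, c i * y i := by
          rw [← hxsum]
          simp only [Finset.sum_apply, Pi.smul_apply, smul_eq_mul, Finset.mul_sum, id_eq]
          rw [Finset.sum_comm]
          exact Finset.sum_congr rfl fun y _ => Finset.sum_congr rfl fun i _ => by ring
        have hsplit : ∑ y ∈ T, w y * ∑ i, c i * y i = 0 := by rw [← hdotsum, hx0]
        have hzero : ∀ y ∈ T, w y * ∑ i, c i * y i = 0 := by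
          have := (Finset.sum_eq_zero_iff_of_nonneg fun y hy =>
            mul_nonneg (hwnn y hy) (hnny y hy)).mp hsplit
          exact this
        have hsupport : ∀ y ∈ T, w y ≠ 0 → y ∈ ({0} ∪ vecOf n '' EH : Set (Fin n → ℝ)) := by
          intro y hy hyne
          have hdy : ∑ i, c i * y i = 0 := by
            rcases mul_eq_zero.mp (hzero y hy) with h | h
            · exact absurd h hyne
            · exact h
          rcases hfin.mem_toFinset.mp hy with rfl | ⟨f, hf, rfl⟩
          · exact Set.mem_union_left _ rfl
          · rw [dot_vecOf] at hdy
            by_cases hfH : f ∈ EH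
            · exact Set.mem_union_right _ ⟨f, hfH, rfl⟩
            · exfalso; have := hnEH f hf hfH; linarith
        rw [tQ, ← hx, ← Finset.centerMass_filter_ne_zero]
        apply Finset.centerMass_mem_convexHull
        · intro y hy
          exact hwnn y (Finset.mem_filter.mp hy).1
        · have : ∑ y ∈ {y ∈ T | w y ≠ 0}, w y = 1 := by
            rw [Finset.sum_filter_ne_zero, hw1]
          rw [this]; norm_num
        · intro y hy
          obtain ⟨hyT, hyne⟩ := Finset.mem_filter.mp hy
          exact hsupport y hyT hyne
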